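/- Let D be an orientation of a graph G, let X ⊆ V(G) be such that every arc between X and V(G) − X is directed from X to V(G) − X, and suppose the induced sub-digraph D[X] is acyclic. Then D is Alon–Tarsi if and only if D[V(G) − X] is Alon–Tarsi. -/
import Mathlib


/-- Out-degree of `v` in the digraph with arc set `A`. -/
def outdeg {V : Type*} [DecidableEq V] (A : Finset (V × V)) (v : V) : ℕ :=
  (A.filter fun a => a.1 = v).card

/-- In-degree of `v` in the digraph with arc set `A`. -/
def indeg {V : Type*} [DecidableEq V] (A : Finset (V × V)) (v : V) : ℕ :=
  (A.filter fun a => a.2 = v).card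

/-- The spanning Eulerian sub-digraphs of the digraph with arc set `D`:
sub-digraphs (on the same vertex set) in which every vertex has equal
in-degree and out-degree. -/
def eulerSubs {V : Type*} [Fintype V] [DecidableEq V] (D : Finset (V × V)) :
    Finset (Finset (V × V)) :=
  D.powerset.filter fun A => ∀ v, indeg A v = outdeg A v

/-- `diffAT D` = (number of even spanning Eulerian sub-digraphs) −
(number of odd spanning Eulerian sub-digraphs). -/
def diffAT {V : Type*} [Fintype V] [DecidableEq V] (D : Finset (V × V)) : ℤ :=
  (((eulerSubs D).filter fun A => Even A.card).card : ℤ) -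
    (((eulerSubs D).filter fun A => ¬ Even A.card).card : ℤ)

/-- A digraph is Alon–Tarsi if `diffAT D ≠ 0`. -/
def IsAT {V : Type*} [Fintype V] [DecidableEq V] (D : Finset (V × V)) : Prop :=
  diffAT D ≠ 0

/-- `D` is an orientation of the simple graph `G`. -/
def IsOrientation {V : Type*} (G : SimpleGraph V) (D : Finset (V × V)) : Prop :=
  (∀ u v : V, G.Adj u v ↔ ((u, v) ∈ D ∨ (v, u) ∈ D)) ∧
    ∀ u v : V, ¬((u, v) ∈ D ∧ (v, u) ∈ D)

/-- If all arcs between `X` and its complement go out of `X` and `D[X]` is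
acyclic, then `D` is Alon–Tarsi iff `D[V − X]` is Alon–Tarsi. -/
theorem isAT_iff_of_acyclic_part {V : Type*} [Fintype V] [DecidableEq V]
    (G : SimpleGraph V) (D : Finset (V × V)) (hor : IsOrientation G D)
    (X : Finset V) (harc : ∀ a ∈ D, ¬(a.1 ∉ X ∧ a.2 ∈ X))
    (hacyc : ∀ u v : V, (u, v) ∈ D.filter (fun a => a.1 ∈ X ∧ a.2 ∈ X) →
      ¬ Relation.ReflTransGen
        (fun x y : V => (x, y) ∈ D.filter (fun a => a.1 ∈ X ∧ a.2 ∈ X)) v u) :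
    IsAT D ↔ IsAT (D.filter fun a => a.1 ∉ X ∧ a.2 ∉ X) := by
  set R : V → V → Prop := fun x y : V => (x, y) ∈ D.filter (fun a => a.1 ∈ X ∧ a.2 ∈ X)
    with hR
  -- well-foundedness of the acyclic relation R
  have hirr : ∀ a, ¬ Relation.TransGen R a a := by
    intro a h
    rcases (Relation.transGen_iff R a a).1 h with h1 | ⟨c, hac, hca⟩
    · exact hacyc a a h1 Relation.ReflTransGen.refl
    · exact hacyc c a hca hac.to_reflTransGen
  have wfT : WellFounded (Relation.TransGen R) := by
    have : IsTrans V (Relation.TransGen R) := ⟨fun _ _ _ => Relation.TransGen.trans⟩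
    have : IsIrrefl V (Relation.TransGen R) := ⟨hirr⟩
    exact Finite.wellFounded_of_trans_of_irrefl _
  have wf : WellFounded R := Subrelation.wf (fun h => Relation.TransGen.single h) wfT
  -- key: a balanced subdigraph of D has no arcs touching X
  have key : ∀ A : Finset (V × V), A ⊆ D → (∀ v, indeg A v = outdeg A v) →
      ∀ a ∈ A, a.1 ∉ X ∧ a.2 ∉ X := by
    intro A hAD hbal
    have notail : ∀ v, v ∈ X → ∀ w, (v, w) ∉ A := by
      intro v
      induction v using WellFounded.induction wf with
      | _ v ih =>
        intro hv w hvw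
        -- v has positive out-degree in A, hence positive in-degree
        have hout : 0 < outdeg A v :=
          Finset.card_pos.2 ⟨(v, w), Finset.mem_filter.2 ⟨hvw, rfl⟩⟩
        have hin : 0 < indeg A v := by rw [hbal v]; exact hout
        obtain ⟨a, ha⟩ := Finset.card_pos.1 hin
        simp only [indeg, Finset.mem_filter] at ha
        obtain ⟨haA, ha2⟩ := ha
        have haD := hAD haA
        have hx : a.1 ∈ X := by
          by_contra hx
          exact harc a haD ⟨hx, ha2 ▸ hv⟩
        have hRav : R a.1 v := by
          rw [hR]
          exact Finset.mem_filter.2 ⟨by rw [← ha2]; exact haD, hx, ha2 ▸ hv⟩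
        exact ih a.1 hRav hx a.2 haA
    intro a ha
    have h1 : a.1 ∉ X := fun h => notail a.1 h a.2 ha
    refine ⟨h1, fun h2 => ?_⟩
    exact h1 (by by_contra hx; exact harc a (hAD ha) ⟨hx, h2⟩)
  have heq : eulerSubs D = eulerSubs (D.filter fun a => a.1 ∉ X ∧ a.2 ∉ X) := by
    ext A
    simp only [eulerSubs, Finset.mem_filter, Finset.mem_powerset]
    constructor
    · rintro ⟨hAD, hbal⟩
      exact ⟨fun a ha => Finset.mem_filter.2 ⟨hAD ha, key A hAD hbal a ha⟩, hbal⟩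
    · rintro ⟨hAD, hbal⟩
      exact ⟨fun a ha => (Finset.mem_filter.1 (hAD ha)).1, hbal⟩
  unfold IsAT diffAT
  rw [heq]
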